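/- Let X be a locally compact Hausdorff totally disconnected space with a continuous right action of a locally profinite group H, V ⊆ W compact open subgroups of H, Y ⊆ X a (W,V)-smooth compact open subset, and S ⊆ X a W-invariant compact open subset. Then Y \ S and Y ∩ S are (W,V)-smooth. If moreover S is (W,V)-smooth, then Y ∪ S is (W,V)-smooth. -/

import Mathlib

/-- A `W`-invariant compact open set `Y` is `(W,V)`-smooth if it is the disjoint union of the
translates `Z·γ`, `γ ∈ V\W`, of a `V`-invariant compact open set `Z`. -/
def IsSmoothPair {X H : Type*} [TopologicalSpace X] [Group H]
    (ρ : X → H → X) (W V : Subgroup H) (Y : Set X) : Prop :=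
  ∃ Z : Set X, IsCompact Z ∧ IsOpen Z ∧
    (∀ v ∈ V, ∀ z ∈ Z, ρ z v ∈ Z) ∧
    Y = ⋃ γ ∈ (W : Set H), (fun z => ρ z γ) '' Z ∧
    (∀ γ ∈ W, ∀ γ' ∈ W, γ * γ'⁻¹ ∉ V →
      Disjoint ((fun z => ρ z γ) '' Z) ((fun z => ρ z γ') '' Z))

lemma smooth_inter_invariant {X H : Type*} [TopologicalSpace X] [Group H]
    (ρ : X → H → X) (hρone : ∀ x, ρ x 1 = x)
    (hρmul : ∀ x g h, ρ (ρ x g) h = ρ x (g * h))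
    (W V : Subgroup H) (hVW : V ≤ W)
    (Z Y T : Set X)
    (hZV : ∀ v ∈ V, ∀ z ∈ Z, ρ z v ∈ Z)
    (hYeq : Y = ⋃ γ ∈ (W : Set H), (fun z => ρ z γ) '' Z)
    (hdisj : ∀ γ ∈ W, ∀ γ' ∈ W, γ * γ'⁻¹ ∉ V →
      Disjoint ((fun z => ρ z γ) '' Z) ((fun z => ρ z γ') '' Z))
    (hTinv : ∀ w ∈ W, ∀ x ∈ T, ρ x w ∈ T)
    (hc : IsCompact (Z ∩ T)) (ho : IsOpen (Z ∩ T)) :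
    IsSmoothPair ρ W V (Y ∩ T) := by
  refine ⟨Z ∩ T, hc, ho, ?_, ?_, ?_⟩
  · intro v hv z hz
    exact ⟨hZV v hv z hz.1, hTinv v (hVW hv) z hz.2⟩
  · ext x
    simp only [hYeq, Set.mem_inter_iff, Set.mem_iUnion, Set.mem_image, exists_prop,
      SetLike.mem_coe]
    constructor
    · rintro ⟨⟨γ, hγ, z, hz, rfl⟩, hT⟩
      refine ⟨γ, hγ, z, ⟨hz, ?_⟩, rfl⟩
      have := hTinv γ⁻¹ (inv_mem hγ) _ hT
      rwa [hρmul, mul_inv_cancel, hρone] at this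
    · rintro ⟨γ, hγ, z, ⟨hz, hzT⟩, rfl⟩
      exact ⟨⟨γ, hγ, z, hz, rfl⟩, hTinv γ hγ z hzT⟩
  · intro γ hγ γ' hγ' h
    exact (hdisj γ hγ γ' hγ' h).mono (Set.image_mono Set.inter_subset_left)
      (Set.image_mono Set.inter_subset_left)

/-- If `Y` is a `(W,V)`-smooth compact open subset and `S` is a `W`-invariant compact open
subset, then `Y \ S` and `Y ∩ S` are `(W,V)`-smooth; if moreover `S` is `(W,V)`-smooth,
then so is `Y ∪ S`. -/
theorem smooth_set_diff_inter_union
    {X H : Type*} [TopologicalSpace X] [LocallyCompactSpace X] [T2Space X]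
    [TotallyDisconnectedSpace X]
    [Group H] [TopologicalSpace H] [IsTopologicalGroup H]
    [LocallyCompactSpace H] [TotallyDisconnectedSpace H]
    (ρ : X → H → X)
    (hρcont : Continuous fun p : X × H => ρ p.1 p.2)
    (hρone : ∀ x, ρ x 1 = x)
    (hρmul : ∀ x g h, ρ (ρ x g) h = ρ x (g * h))
    (W V : Subgroup H) (hVW : V ≤ W)
    (hWc : IsCompact (W : Set H)) (hWo : IsOpen (W : Set H))
    (hVc : IsCompact (V : Set H)) (hVo : IsOpen (V : Set H))
    (Y S : Set X)
    (hY : IsSmoothPair ρ W V Y) (hYc : IsCompact Y) (hYo : IsOpen Y)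
    (hSc : IsCompact S) (hSo : IsOpen S)
    (hSinv : ∀ w ∈ W, ∀ s ∈ S, ρ s w ∈ S) :
    IsSmoothPair ρ W V (Y \ S) ∧ IsSmoothPair ρ W V (Y ∩ S) ∧
      (IsSmoothPair ρ W V S → IsSmoothPair ρ W V (Y ∪ S)) := by
  obtain ⟨Z, hZc, hZo, hZV, hYeq, hZdisj⟩ := hY
  have hScl : IsClosed S := hSc.isClosed
  have hSinv' : ∀ w ∈ W, ∀ x, ρ x w ∈ S → x ∈ S := by
    intro w hw x hx
    have := hSinv w⁻¹ (inv_mem hw) _ hx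
    rwa [hρmul, mul_inv_cancel, hρone] at this
  have hScinv : ∀ w ∈ W, ∀ x ∈ Sᶜ, ρ x w ∈ Sᶜ :=
    fun w hw x hx hmem => hx (hSinv' w hw x hmem)
  have hdiff : IsSmoothPair ρ W V (Y ∩ Sᶜ) :=
    smooth_inter_invariant ρ hρone hρmul W V hVW Z Y Sᶜ hZV hYeq hZdisj hScinv
      (hZc.inter_right (isClosed_compl_iff.mpr hSo)) (hZo.inter hScl.isOpen_compl)
  have hinter : IsSmoothPair ρ W V (Y ∩ S) :=
    smooth_inter_invariant ρ hρone hρmul W V hVW Z Y S hZV hYeq hZdisj hSinv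
      (hZc.inter hSc) (hZo.inter hSo)
  refine ⟨by rwa [Set.diff_eq], hinter, ?_⟩
  rintro ⟨Z', hZ'c, hZ'o, hZ'V, hSeq, hZ'disj⟩
  set A : Set X := Z ∩ Sᶜ with hA
  have hAV : ∀ v ∈ V, ∀ z ∈ A, ρ z v ∈ A :=
    fun v hv z hz => ⟨hZV v hv z hz.1, hScinv v (hVW hv) z hz.2⟩
  have hAsub : ∀ γ ∈ W, (fun z => ρ z γ) '' A ⊆ Sᶜ := by
    rintro γ hγ x ⟨z, ⟨hz, hzS⟩, rfl⟩ hx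
    exact hzS (hSinv' γ hγ z hx)
  have hBsub : ∀ γ ∈ W, (fun z => ρ z γ) '' Z' ⊆ S := by
    intro γ hγ
    have := Set.subset_iUnion₂ (s := fun γ (_ : γ ∈ (W : Set H)) => (fun z => ρ z γ) '' Z') γ hγ
    rwa [← hSeq] at this
  obtain ⟨ZA, hZAc, hZAo, hZAV, hdiffeq, hdiffdisj⟩ := hdiff
  refine ⟨A ∪ Z', (hZc.inter_right (isClosed_compl_iff.mpr hSo)).union hZ'c,
    (hZo.inter hScl.isOpen_compl).union hZ'o, ?_, ?_, ?_⟩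
  · intro v hv z hz
    rcases hz with hz | hz
    · exact Or.inl (hAV v hv z hz)
    · exact Or.inr (hZ'V v hv z hz)
  · have hAeq : Y ∩ Sᶜ = ⋃ γ ∈ (W : Set H), (fun z => ρ z γ) '' A := by
        ext x
        simp only [Set.mem_inter_iff, Set.mem_iUnion, Set.mem_image, exists_prop, hYeq]
        constructor
        · rintro ⟨⟨γ, hγ, z, hz, rfl⟩, hT⟩
          refine ⟨γ, hγ, z, ⟨hz, ?_⟩, rfl⟩
          intro hzS
          exact hT (hSinv γ hγ z hzS)
        · rintro ⟨γ, hγ, z, ⟨hz, hzT⟩, rfl⟩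
          exact ⟨⟨γ, hγ, z, hz, rfl⟩, fun hmem => hzT (hSinv' γ hγ z hmem)⟩
    calc Y ∪ S = (Y ∩ Sᶜ) ∪ S := by rw [← Set.diff_eq, Set.diff_union_self]
    _ = ⋃ γ ∈ (W : Set H), (fun z => ρ z γ) '' (A ∪ Z') := by
        rw [hAeq, hSeq]
        simp only [Set.image_union, Set.iUnion_union_distrib]
  · intro γ hγ γ' hγ' h
    rw [Set.image_union, Set.image_union, Set.disjoint_union_left, Set.disjoint_union_right,
      Set.disjoint_union_right]
    refine ⟨⟨(hZdisj γ hγ γ' hγ' h).mono (Set.image_mono Set.inter_subset_left)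
        (Set.image_mono Set.inter_subset_left), ?_⟩, ?_, hZ'disj γ hγ γ' hγ' h⟩
    · exact Set.disjoint_left.mpr fun {x} hx hx' => hAsub γ hγ hx (hBsub γ' hγ' hx')
    · exact Set.disjoint_left.mpr fun {x} hx hx' => hAsub γ' hγ' hx' (hBsub γ hγ hx)
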